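/- Let q ≥ 1, m ≥ 3, Σ = {x_1, …, x_q}, and let S = ⋃_{i=1}^q {x_i^m, x_i^{m+1}} ∪ ⋃_{i ≠ j} {x_i x_j^{m−1}, x_j^{m−1} x_i}. If every word over Σ of length (q−1)m² − 2qm + 3m is in S^†, then every word over Σ of length at least qm² − 2qm + 2m is in S^†. -/
import Mathlib

inductive Shuffle {α : Type*} : List α → List α → List α → Prop
  | nil : Shuffle [] [] []
  | left {a : α} {u v w : List α} : Shuffle u v w → Shuffle (a :: u) v (a :: w)
  | right {a : α} {u v w : List α} : Shuffle u v w → Shuffle u (a :: v) (a :: w)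

inductive IterShuffle {α : Type*} (S : Set (List α)) : List α → Prop
  | nil : IterShuffle S []
  | step {u w y : List α} : u ∈ S → IterShuffle S w → Shuffle u w y → IterShuffle S y

lemma shuffle_nil_left {α : Type*} (v : List α) : Shuffle [] v v := by
  induction v with
  | nil => exact Shuffle.nil
  | cons a t ih => exact Shuffle.right ih

lemma extract {α : Type*} [DecidableEq α] :
    ∀ (z : List α) (k : ℕ) (i : α), k ≤ z.count i →
    ∃ z', Shuffle (List.replicate k i) z' z ∧ z'.length + k = z.length := by
  intro z
  induction z with
  | nil =>
    intro k i hk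
    simp at hk
    subst hk
    exact ⟨[], Shuffle.nil, rfl⟩
  | cons a t ih =>
    intro k i hk
    match k with
    | 0 => exact ⟨a :: t, shuffle_nil_left _, by simp⟩
    | k' + 1 =>
      by_cases hai : a = i
      · subst hai
        have hk' : k' ≤ t.count a := by simp [List.count_cons] at hk; omega
        obtain ⟨z', hs, hl⟩ := ih k' a hk'
        exact ⟨z', by simpa [List.replicate_succ] using Shuffle.left hs, by simp; omega⟩
      · have hk' : k' + 1 ≤ t.count i := by
          simp only [List.count_cons, beq_iff_eq, if_neg hai] at hk
          omega
        obtain ⟨z', hs, hl⟩ := ih _ i hk'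
        exact ⟨a :: z', Shuffle.right hs, by simp; omega⟩

lemma length_eq_sum_count {q : ℕ} (z : List (Fin q)) : z.length = ∑ i, z.count i := by
  induction z with
  | nil => simp
  | cons a t ih =>
    simp only [List.count_cons, List.length_cons, ih]
    rw [Finset.sum_add_distrib]
    simp

lemma pigeon {q k : ℕ} (z : List (Fin q)) (h : q * k + 1 ≤ z.length) :
    ∃ i, k + 1 ≤ z.count i := by
  by_contra hc
  push_neg at hc
  have hlen := length_eq_sum_count z
  have hb : ∑ i : Fin q, z.count i ≤ ∑ _i : Fin q, k :=
    Finset.sum_le_sum (fun i _ => by have := hc i; omega)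
  simp [Finset.sum_const, Finset.card_univ, mul_comm] at hb
  omega

section Main
variable {q m : ℕ} {S : Set (List (Fin q))}

lemma lemA (hq : 1 ≤ q) (hm : 3 ≤ m)
    (hmem : ∀ i : Fin q, List.replicate m i ∈ S)
    (hshort : ∀ z : List (Fin q), z.length = (q-1)*m*(m-2) + m → IterShuffle S z) :
    ∀ (a : ℕ) (z : List (Fin q)), z.length = (q-1)*m*(m-2) + m + a*m → IterShuffle S z := by
  intro a
  induction a with
  | zero => intro z hz; exact hshort z (by omega)
  | succ a ih =>
    intro z hz
    have hlong : q * (m-1) + 1 ≤ z.length := by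
      obtain ⟨q', rfl⟩ : ∃ q', q = q' + 1 := ⟨q - 1, by omega⟩
      obtain ⟨m', rfl⟩ : ∃ m', m = m' + 3 := ⟨m - 3, by omega⟩
      simp only [Nat.add_sub_cancel] at hz ⊢
      have : (m' + 3) - 2 = m' + 1 := by omega
      rw [this] at hz
      have : (m' + 3) - 1 = m' + 2 := by omega
      rw [this]
      nlinarith [Nat.zero_le (q' * (m' + 3) * (m' + 1)), Nat.zero_le (a * (m' + 3))]
    obtain ⟨i, hi⟩ := pigeon z hlong
    have hm1 : (m - 1) + 1 = m := by omega
    rw [hm1] at hi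
    obtain ⟨z', hs, hl⟩ := extract z m i hi
    have hsm : (a+1)*m = a*m + m := by ring
    exact IterShuffle.step (hmem i) (ih z' (by omega)) hs

lemma lemB (hq : 1 ≤ q) (hm : 3 ≤ m)
    (hmem : ∀ i : Fin q, List.replicate m i ∈ S)
    (hmem1 : ∀ i : Fin q, List.replicate (m+1) i ∈ S)
    (hshort : ∀ z : List (Fin q), z.length = (q-1)*m*(m-2) + m → IterShuffle S z) :
    ∀ (b a : ℕ) (z : List (Fin q)),
      z.length = (q-1)*m*(m-2) + m + a*m + b*(m+1) → IterShuffle S z := by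
  intro b
  induction b with
  | zero => intro a z hz; exact lemA hq hm hmem hshort a z (by omega)
  | succ b ih =>
    intro a z hz
    have hlong : q * m + 1 ≤ z.length := by
      obtain ⟨q', rfl⟩ : ∃ q', q = q' + 1 := ⟨q - 1, by omega⟩
      obtain ⟨m', rfl⟩ : ∃ m', m = m' + 3 := ⟨m - 3, by omega⟩
      simp only [Nat.add_sub_cancel] at hz ⊢
      have h2 : (m' + 3) - 2 = m' + 1 := by omega
      rw [h2] at hz
      nlinarith [Nat.zero_le (q' * (m' + 3) * (m' + 1)), Nat.zero_le (a * (m' + 3)),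
        Nat.zero_le (b * (m' + 4))]
    obtain ⟨i, hi⟩ := pigeon z hlong
    obtain ⟨z', hs, hl⟩ := extract z (m+1) i hi
    have hsm : (b+1)*(m+1) = b*(m+1) + (m+1) := by ring
    exact IterShuffle.step (hmem1 i) (ih a z' (by omega)) hs

end Main

/-- For `q ≥ 1`, `m ≥ 3` and the prototypical set `S`: if every word of length
`(q-1)m² - 2qm + 3m` is in `S^†`, then every word of length at least
`qm² - 2qm + 2m` is in `S^†`. -/
theorem iterShuffle_of_all_short (q m : ℕ) (hq : 1 ≤ q) (hm : 3 ≤ m)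
    (S : Set (List (Fin q)))
    (hS : S = {w | ∃ i : Fin q, w = List.replicate m i ∨ w = List.replicate (m + 1) i} ∪
              {w | ∃ i j : Fin q, i ≠ j ∧
                (w = i :: List.replicate (m - 1) j ∨
                 w = List.replicate (m - 1) j ++ [i])})
    (hshort : ∀ z : List (Fin q),
      (z.length : ℤ) = ((q : ℤ) - 1) * m ^ 2 - 2 * q * m + 3 * m → IterShuffle S z) :
    ∀ y : List (Fin q),
      (q : ℤ) * m ^ 2 - 2 * q * m + 2 * m ≤ (y.length : ℤ) → IterShuffle S y := by
  have hq' : (1 : ℤ) ≤ (q : ℤ) := by exact_mod_cast hq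
  have hm' : (3 : ℤ) ≤ (m : ℤ) := by exact_mod_cast hm
  have hcast : ∀ n : ℕ, (n : ℤ) = ((q : ℤ) - 1) * m * ((m : ℤ) - 2) + m ↔
      n = (q-1)*m*(m-2) + m := by
    intro n
    constructor
    · intro h
      have : (n : ℤ) = (((q-1)*m*(m-2) + m : ℕ) : ℤ) := by
        rw [h]; push_cast [Nat.cast_sub hq, Nat.cast_sub (by omega : 2 ≤ m)]; ring
      exact_mod_cast this
    · intro h
      subst h
      push_cast [Nat.cast_sub hq, Nat.cast_sub (by omega : 2 ≤ m)]
      ring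
  have hmem : ∀ i : Fin q, List.replicate m i ∈ S := by
    intro i; rw [hS]; exact Or.inl ⟨i, Or.inl rfl⟩
  have hmem1 : ∀ i : Fin q, List.replicate (m+1) i ∈ S := by
    intro i; rw [hS]; exact Or.inl ⟨i, Or.inr rfl⟩
  have hshort' : ∀ z : List (Fin q), z.length = (q-1)*m*(m-2) + m → IterShuffle S z := by
    intro z hz
    apply hshort
    exact ((hcast z.length).mpr hz).trans (by ring)
  intro y hy
  -- convert the length bound to ℕ
  have hyN : (q-1)*m*(m-2) + m + (m*m - m) ≤ y.length := by
    have hc : (((q-1)*m*(m-2) + m + (m*m - m) : ℕ) : ℤ)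
        = (q : ℤ) * m ^ 2 - 2 * q * m + 2 * m := by
      push_cast [Nat.cast_sub hq, Nat.cast_sub (by omega : 2 ≤ m),
        Nat.cast_sub (Nat.le_mul_of_pos_left m (by omega) : m ≤ m*m)]
      ring
    have : (((q-1)*m*(m-2) + m + (m*m - m) : ℕ) : ℤ) ≤ (y.length : ℤ) := by
      rw [hc]; exact hy
    exact_mod_cast this
  set L0 := (q-1)*m*(m-2) + m with hL0
  set r := y.length - L0 with hr
  have hrge : m*m - m ≤ r := by omega
  have hrlen : y.length = L0 + r := by omega
  -- represent r = a*m + b*(m+1)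
  have hm0 : 0 < m := by omega
  set t := r % m with ht
  set d := r / m with hd
  have htm : t < m := Nat.mod_lt _ hm0
  have hdm : m * d + t = r := Nat.div_add_mod r m
  have hdge : m - 1 ≤ d := by
    rw [hd]
    rw [Nat.le_div_iff_mul_le hm0]
    have : (m-1) * m = m * m - 1 * m := Nat.sub_mul m 1 m
    rw [one_mul] at this
    omega
  have htd : t ≤ d := by omega
  have hrep : (d - t) * m + t * (m + 1) = r := by
    have h1 : t * m ≤ d * m := Nat.mul_le_mul_right _ htd
    have h2 : (d - t) * m = d * m - t * m := Nat.sub_mul d t m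
    have h3 : t * (m+1) = t * m + t := by ring
    have h4 : d * m = m * d := Nat.mul_comm d m
    omega
  exact lemB hq hm hmem hmem1 hshort' t (d - t) y (by omega)
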